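/- arXiv:1808.10286 — 2 statements merged into one kernel-verified Lean document; each statement's English description precedes it below -/
import Mathlib

section
/- Let θ be a real number with 0 < θ ≤ 1/2 and let q be a positive integer. Then there exists a finite set W of q-tuples of nonnegative real numbers, of cardinality at most (e/θ)^{q-1}, such that every tuple (c_1,…,c_q) ∈ W satisfies c_1 + ⋯ + c_q = 1, and with the following property: for every choice of real numbers A_1,…,A_q and Λ with A_j ≤ 0 for j = 1,…,q and A_1 + ⋯ + A_q ≤ −Λ, there exists a tuple (c_1,…,c_q) ∈ W such that A_j ≤ −c_j(1−θ)Λ for all j = 1,…,q. -/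
open Finset

lemma ef_exists_tuple_sum_eq {ι : Type*} [DecidableEq ι] (s : Finset ι) :
    ∀ (b : ι → ℕ) (N : ℕ), N ≤ ∑ i ∈ s, b i →
      ∃ m : ι → ℕ, (∀ i, m i ≤ b i) ∧ ∑ i ∈ s, m i = N := by
  induction s using Finset.induction_on with
  | empty =>
    intro b N hN
    simp only [Finset.sum_empty, Nat.le_zero] at hN
    exact ⟨fun _ => 0, fun _ => Nat.zero_le _, by simp [hN]⟩
  | @insert a s ha ih =>
    intro b N hN
    rw [Finset.sum_insert ha] at hN
    set t := ∑ i ∈ s, b i with ht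
    obtain ⟨m, hm, hms⟩ := ih b (min N t) (min_le_right _ _)
    refine ⟨Function.update m a (N - min N t), ?_, ?_⟩
    · intro i
      rcases eq_or_ne i a with rfl | hia
      · rw [Function.update_self]; omega
      · rw [Function.update_of_ne hia]; exact hm i
    · rw [Finset.sum_insert ha, Function.update_self]
      have : ∑ i ∈ s, Function.update m a (N - min N t) i = ∑ i ∈ s, m i := by
        refine Finset.sum_congr rfl fun i hi => ?_
        rw [Function.update_of_ne]
        rintro rfl; exact ha hi
      rw [this, hms]; omega

/-- `e * (k/e)^k ≤ k!` for `k ≥ 1`. -/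
lemma ef_factorial_lower (k : ℕ) (hk : 1 ≤ k) :
    Real.exp 1 * ((k : ℝ) / Real.exp 1) ^ k ≤ (k.factorial : ℝ) := by
  induction k with
  | zero => omega
  | succ n ih =>
    rcases Nat.eq_or_lt_of_le hk with h | h
    · have hn0 : n = 0 := by omega
      subst hn0
      norm_num [mul_one_div, div_self (ne_of_gt (Real.exp_pos 1))]
    · have hn : 1 ≤ n := by omega
      have ihn := ih hn
      have hE : (0:ℝ) < Real.exp 1 := Real.exp_pos 1
      have hnR : (0:ℝ) < n := by exact_mod_cast hn
      have key : ((n:ℝ) + 1) ^ n ≤ Real.exp 1 * (n:ℝ) ^ n := by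
        have h2 : (1 + 1/(n:ℝ)) ≤ Real.exp (1/(n:ℝ)) := by
          have := Real.add_one_le_exp (1/(n:ℝ)); linarith
        calc ((n:ℝ) + 1) ^ n = (1 + 1/(n:ℝ)) ^ n * (n:ℝ) ^ n := by
              rw [← mul_pow]; congr 1; field_simp
          _ ≤ Real.exp (1/(n:ℝ)) ^ n * (n:ℝ) ^ n := by
              apply mul_le_mul_of_nonneg_right _ (by positivity)
              exact pow_le_pow_left₀ (by positivity) h2 n
          _ = Real.exp ((n:ℕ) * (1/(n:ℝ))) * (n:ℝ) ^ n := by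
              rw [← Real.exp_nat_mul]
          _ = Real.exp 1 * (n:ℝ) ^ n := by
              rw [mul_one_div, div_self (ne_of_gt hnR)]
      have hfact : (Nat.factorial (n+1) : ℝ) = ((n:ℝ)+1) * (Nat.factorial n : ℝ) := by
        push_cast [Nat.factorial_succ]; ring
      rw [hfact]
      push_cast
      calc Real.exp 1 * (((n:ℝ)+1) / Real.exp 1) ^ (n+1)
          = ((n:ℝ)+1) * (((n:ℝ)+1)^n / Real.exp 1 ^ n) := by
            rw [div_pow, pow_succ, pow_succ]; field_simp
        _ ≤ ((n:ℝ)+1) * (Real.exp 1 * (n:ℝ)^n / Real.exp 1 ^ n) := by gcongr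
        _ = ((n:ℝ)+1) * (Real.exp 1 * ((n:ℝ) / Real.exp 1) ^ n) := by
            rw [div_pow]; ring
        _ ≤ ((n:ℝ)+1) * (Nat.factorial n : ℝ) :=
            mul_le_mul_of_nonneg_left ihn (by positivity)

lemma ef_card_finset_sum {ι α : Type*} (s : Finset ι) (f : ι → Multiset α) :
    Multiset.card (∑ i ∈ s, f i) = ∑ i ∈ s, Multiset.card (f i) := by
  classical
  induction s using Finset.cons_induction with
  | empty => simp
  | cons a s ha ih => simp [Finset.sum_cons, ih]

/-- Stars and bars bound for the number of `q`-tuples with sum `N`. -/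
lemma ef_card_le (q N : ℕ) :
    (Finset.Nat.antidiagonalTuple q N).card ≤ (q + N - 1).choose N := by
  classical
  have hsym : Fintype.card (Sym (Fin q) N) = (q + N - 1).choose N := by
    rw [Sym.card_sym_eq_choose, Fintype.card_fin]
  rw [← Fintype.card_coe, ← hsym]
  apply Fintype.card_le_of_injective
    (fun x => ⟨∑ j, (x.1 j) • ({j} : Multiset (Fin q)), by
      have hx : ∑ i, x.1 i = N := Finset.Nat.mem_antidiagonalTuple.mp x.2
      simp [ef_card_finset_sum, Multiset.card_nsmul, hx]⟩)
  intro x y hxy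
  have hcount : ∀ j : Fin q, x.1 j = y.1 j := by
    intro j
    have := congrArg (fun z : Sym (Fin q) N => Multiset.count j z.1) hxy
    simpa [Multiset.count_sum', Multiset.count_nsmul, Multiset.count_singleton,
      Finset.sum_ite_eq'] using this
  exact Subtype.ext (funext hcount)

/-- Evertse–Ferretti covering lemma (Lemma 5.2). -/
theorem evertse_ferretti_covering_lemma
    (θ : ℝ) (hθ0 : 0 < θ) (hθ1 : θ ≤ 1 / 2) (q : ℕ) (hq : 0 < q) :
    ∃ W : Finset (Fin q → ℝ),
      (W.card : ℝ) ≤ (Real.exp 1 / θ) ^ (q - 1) ∧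
      (∀ c ∈ W, (∀ j, 0 ≤ c j) ∧ ∑ j, c j = 1) ∧
      (∀ (A : Fin q → ℝ) (Λ : ℝ),
        (∀ j, A j ≤ 0) → (∑ j, A j) ≤ -Λ →
        ∃ c ∈ W, ∀ j, A j ≤ -(c j * (1 - θ) * Λ)) := by
  classical
  have hE : (0:ℝ) < Real.exp 1 := Real.exp_pos 1
  have h1θ : (0:ℝ) < 1 - θ := by linarith
  by_cases hq1 : q = 1
  · subst hq1
    refine ⟨{fun _ => 1}, by simp, ?_, ?_⟩
    · intro c hc
      rw [Finset.mem_singleton] at hc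
      subst hc
      exact ⟨fun _ => zero_le_one, by simp⟩
    · intro A Λ hA hsum
      refine ⟨fun _ => 1, Finset.mem_singleton_self _, fun j => ?_⟩
      have hj : j = 0 := Subsingleton.elim _ _
      rw [Fin.sum_univ_one] at hsum
      rw [hj]
      show A 0 ≤ -(1 * (1 - θ) * Λ)
      rcases le_or_gt 0 Λ with h | h
      · nlinarith
      · nlinarith [hA (0 : Fin 1)]
  -- main case : q ≥ 2
  have hq2 : 2 ≤ q := by omega
  set k := q - 1 with hkdef
  have hk : 1 ≤ k := by omega
  set K : ℝ := ((k : ℕ) : ℝ) with hKdef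
  have hKpos : (0:ℝ) < K := by
    rw [hKdef]; exact_mod_cast hk
  set N : ℕ := ⌈K * (1 - θ) / θ⌉₊ with hNdef
  have hN1 : K * (1 - θ) / θ ≤ (N : ℝ) := Nat.le_ceil _
  have hKθpos : (0:ℝ) < K * (1 - θ) / θ := div_pos (mul_pos hKpos h1θ) hθ0
  have hN2 : (N : ℝ) ≤ K * (1 - θ) / θ + 1 := (Nat.ceil_lt_add_one hKθpos.le).le
  have hNpos : 0 < N := Nat.ceil_pos.mpr hKθpos
  have hNR : (0:ℝ) < N := by exact_mod_cast hNpos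
  set S : Finset (Fin q → ℕ) := Finset.Nat.antidiagonalTuple q N with hSdef
  set W : Finset (Fin q → ℝ) := S.image (fun m j => (m j : ℝ) / N) with hWdef
  -- basic properties of members of W
  have hWprop : ∀ c ∈ W, (∀ j, 0 ≤ c j) ∧ ∑ j, c j = 1 := by
    intro c hc
    rw [hWdef, Finset.mem_image] at hc
    obtain ⟨m, hm, rfl⟩ := hc
    have hms : ∑ j, m j = N := Finset.Nat.mem_antidiagonalTuple.mp hm
    constructor
    · intro j; positivity
    · rw [← Finset.sum_div]
      rw [div_eq_one_iff_eq (ne_of_gt hNR)]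
      exact_mod_cast hms
  -- covering property
  have hcov : ∀ a : Fin q → ℝ, (∀ j, 0 ≤ a j) → ∑ j, a j = 1 →
      ∃ c ∈ W, ∀ j, c j * (1 - θ) ≤ a j := by
    intro a ha hasum
    set b : Fin q → ℕ := fun j => ⌊a j * N / (1 - θ)⌋₊ with hbdef
    have hble : N ≤ ∑ j, b j := by
      have hne : (Finset.univ : Finset (Fin q)).Nonempty :=
        ⟨⟨0, hq⟩, Finset.mem_univ _⟩
      have hlt : ∑ j, (a j * N / (1 - θ) - 1) < ∑ j, (b j : ℝ) :=
        Finset.sum_lt_sum_of_nonempty hne fun j _ => Nat.sub_one_lt_floor _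
      have hsum_eq : ∑ j, (a j * N / (1 - θ) - 1) = (N : ℝ) / (1 - θ) - q := by
        rw [Finset.sum_sub_distrib]
        simp only [Finset.sum_const, Finset.card_univ, Fintype.card_fin, nsmul_eq_mul, mul_one]
        congr 1
        calc ∑ j, a j * (N:ℝ) / (1-θ) = ∑ j, a j * ((N:ℝ)/(1-θ)) := by
              simp_rw [mul_div_assoc]
          _ = (N:ℝ)/(1-θ) := by rw [← Finset.sum_mul, hasum, one_mul]
      have key : K * (1 - θ) ≤ (N:ℝ) * θ := by
        calc K * (1 - θ) = K * (1 - θ) / θ * θ := by field_simp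
          _ ≤ (N:ℝ) * θ := mul_le_mul_of_nonneg_right hN1 hθ0.le
      have hqK : (q : ℝ) = K + 1 := by
        rw [hKdef, hkdef]; push_cast [Nat.cast_sub (by omega : 1 ≤ q)]; ring
      have hstep : (N:ℝ) - 1 ≤ (N : ℝ) / (1 - θ) - q := by
        rw [le_sub_iff_add_le, le_div_iff₀ h1θ, hqK]
        nlinarith [key]
      have hfin : (N:ℝ) - 1 < ∑ j, (b j : ℝ) := by
        rw [hsum_eq] at hlt; linarith
      have : (N:ℝ) < ((∑ j, b j : ℕ) : ℝ) + 1 := by push_cast; linarith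
      have : N < ∑ j, b j + 1 := by exact_mod_cast this
      omega
    obtain ⟨m, hmle, hms⟩ := ef_exists_tuple_sum_eq Finset.univ b N hble
    refine ⟨fun j => (m j : ℝ) / N, ?_, ?_⟩
    · rw [hWdef, Finset.mem_image]
      exact ⟨m, Finset.Nat.mem_antidiagonalTuple.mpr hms, rfl⟩
    · intro j
      have h1 : (m j : ℝ) ≤ (b j : ℝ) := by exact_mod_cast hmle j
      have h2 : (b j : ℝ) ≤ a j * N / (1 - θ) := Nat.floor_le (div_nonneg (mul_nonneg (ha j) hNR.le) h1θ.le)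
      rw [div_mul_eq_mul_div, div_le_iff₀ hNR]
      calc (m j : ℝ) * (1 - θ) ≤ a j * N / (1 - θ) * (1 - θ) := by
            apply mul_le_mul_of_nonneg_right _ h1θ.le; linarith
        _ = a j * N := by field_simp
  refine ⟨W, ?_, hWprop, ?_⟩
  · -- cardinality
    have hc1 : W.card ≤ S.card := Finset.card_image_le
    have hc2 : S.card ≤ (q + N - 1).choose N := ef_card_le q N
    have hc3 : (q + N - 1).choose N = (N + k).choose k := by
      have h1 : q + N - 1 = N + k := by omega
      rw [h1, ← Nat.choose_symm (Nat.le_add_right N k)]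
      congr 1; omega
    have hdesc : (N + k).choose k * k.factorial ≤ (N + k) ^ k := by
      calc (N + k).choose k * k.factorial = (N+k).descFactorial k := by
            rw [Nat.descFactorial_eq_factorial_mul_choose]; ring
        _ ≤ (N + k) ^ k := Nat.descFactorial_le_pow _ _
    have hCF : ((N + k).choose k : ℝ) * (k.factorial : ℝ) ≤ ((N:ℝ) + K) ^ k := by
      rw [hKdef]
      exact_mod_cast hdesc
    have hF := ef_factorial_lower k hk
    rw [← hKdef] at hF
    -- (N + K)^k ≤ (K/θ)^k * e
    have hNK : (N:ℝ) + K ≤ K / θ + 1 := by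
      have : K * (1 - θ) / θ + K = K / θ := by field_simp; ring
      linarith
    have hsplit : K / θ + 1 = K / θ * (1 + θ / K) := by field_simp
    have hexp : (1 + θ / K) ^ k ≤ Real.exp 1 := by
      have h1 : 1 + θ / K ≤ Real.exp (θ / K) := by
        have := Real.add_one_le_exp (θ / K); linarith
      calc (1 + θ / K) ^ k ≤ Real.exp (θ / K) ^ k :=
            pow_le_pow_left₀ (by positivity) h1 k
        _ = Real.exp ((k : ℕ) * (θ / K)) := by rw [← Real.exp_nat_mul]
        _ = Real.exp θ := by
            congr 1
            rw [← hKdef, mul_comm, div_mul_cancel₀ _ (ne_of_gt hKpos)]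
        _ ≤ Real.exp 1 := Real.exp_le_exp.mpr (by linarith)
    have hNKpow : ((N:ℝ) + K) ^ k ≤ (K / θ) ^ k * Real.exp 1 := by
      calc ((N:ℝ) + K) ^ k ≤ (K / θ + 1) ^ k :=
            pow_le_pow_left₀ (by positivity) hNK k
        _ = (K / θ) ^ k * (1 + θ / K) ^ k := by rw [hsplit, mul_pow]
        _ ≤ (K / θ) ^ k * Real.exp 1 := by
            apply mul_le_mul_of_nonneg_left hexp (by positivity)
    -- put things together
    have hpos : (0:ℝ) < Real.exp 1 * (K / Real.exp 1) ^ k := by positivity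
    have hfinal : ((N + k).choose k : ℝ) ≤ (Real.exp 1 / θ) ^ k := by
      rw [← mul_le_mul_iff_of_pos_right hpos]
      have hrhs : (Real.exp 1 / θ) ^ k * (Real.exp 1 * (K / Real.exp 1) ^ k)
          = (K / θ) ^ k * Real.exp 1 := by
        have h : Real.exp 1 / θ * (K / Real.exp 1) = K / θ := by field_simp
        calc (Real.exp 1 / θ) ^ k * (Real.exp 1 * (K / Real.exp 1) ^ k)
            = (Real.exp 1 / θ * (K / Real.exp 1)) ^ k * Real.exp 1 := by
              rw [mul_pow]; ring
          _ = (K / θ) ^ k * Real.exp 1 := by rw [h]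
      rw [hrhs]
      calc ((N + k).choose k : ℝ) * (Real.exp 1 * (K / Real.exp 1) ^ k)
          ≤ ((N + k).choose k : ℝ) * (k.factorial : ℝ) := by
            apply mul_le_mul_of_nonneg_left hF (by positivity)
        _ ≤ ((N:ℝ) + K) ^ k := hCF
        _ ≤ (K / θ) ^ k * Real.exp 1 := hNKpow
    calc (W.card : ℝ) ≤ ((N + k).choose k : ℝ) := by
          exact_mod_cast hc1.trans (hc2.trans_eq hc3)
      _ ≤ (Real.exp 1 / θ) ^ k := hfinal
  · -- covering
    intro A Λ hA hsum
    rcases le_or_gt Λ 0 with hΛ | hΛ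
    · obtain ⟨c, hcW, -⟩ := hcov (fun _ => 1 / (q:ℝ))
        (fun _ => by positivity)
        (by
          rw [Finset.sum_const, Finset.card_univ, Fintype.card_fin, nsmul_eq_mul]
          field_simp)
      refine ⟨c, hcW, fun j => ?_⟩
      have hcj : 0 ≤ c j := (hWprop c hcW).1 j
      have : 0 ≤ c j * (1 - θ) * (-Λ) :=
        mul_nonneg (mul_nonneg hcj h1θ.le) (by linarith)
      linarith [hA j, this]
    · set L : ℝ := -∑ j, A j with hLdef
      have hL : Λ ≤ L := by rw [hLdef]; linarith
      have hLpos : 0 < L := lt_of_lt_of_le hΛ hL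
      obtain ⟨c, hcW, hcb⟩ := hcov (fun j => -A j / L)
        (fun j => div_nonneg (by linarith [hA j]) hLpos.le)
        (by
          rw [← Finset.sum_div, div_eq_one_iff_eq (ne_of_gt hLpos)]
          rw [hLdef, ← Finset.sum_neg_distrib])
      refine ⟨c, hcW, fun j => ?_⟩
      have hcj : 0 ≤ c j := (hWprop c hcW).1 j
      have h1 : c j * (1 - θ) * L ≤ -A j := by
        have := hcb j
        rw [le_div_iff₀ hLpos] at this
        linarith
      have h2 : c j * (1 - θ) * Λ ≤ c j * (1 - θ) * L :=
        mul_le_mul_of_nonneg_left hL (mul_nonneg hcj h1θ.le)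
      linarith
end

section
/- Let m ≥ n ≥ 1 be integers, let c_0 ≥ c_1 ≥ ⋯ ≥ c_m ≥ 0 be real numbers, let s be a positive integer, let a_1,…,a_s be nonnegative real numbers with a_1 + ⋯ + a_s = D, and for each 1 ≤ j ≤ s let k_{j,0} < k_{j,1} < ⋯ < k_{j,n} be integers with k_{j,0} = 0 and k_{j,l} ≤ m − n + l for all 1 ≤ l ≤ n. Then Σ_{j=1}^s a_j (c_{k_{j,0}} + c_{k_{j,1}} + ⋯ + c_{k_{j,n}}) ≥ (D/(m − n + 1)) · (c_0 + c_1 + ⋯ + c_m). -/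
/-- The concluding displayed estimate in the proof of Theorem 1.4, giving the lower bound
`e_Y(c) ≥ (D/(m−n+1))(c_0 + ⋯ + c_m)` for the Chow weight. -/
theorem chow_weight_final_estimate
    (n m : ℕ) (hn : 1 ≤ n) (hnm : n ≤ m)
    (c : ℕ → ℝ)
    (hmono : ∀ i j : ℕ, i ≤ j → j ≤ m → c j ≤ c i)
    (hnonneg : 0 ≤ c m)
    (s : ℕ) (hs : 0 < s)
    (a : Fin s → ℝ) (ha : ∀ j, 0 ≤ a j)
    (D : ℝ) (haD : ∑ j, a j = D)
    (k : Fin s → Fin (n + 1) → ℕ)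
    (hkmono : ∀ j : Fin s, StrictMono (k j))
    (hk0 : ∀ j : Fin s, k j 0 = 0)
    (hkl : ∀ (j : Fin s) (l : Fin (n + 1)), 1 ≤ (l : ℕ) → k j l ≤ m - n + (l : ℕ)) :
    ∑ j : Fin s, a j * ∑ l : Fin (n + 1), c (k j l) ≥
      (D / (m - n + 1 : ℝ)) * ∑ i ∈ Finset.range (m + 1), c i := by
  set M := m - n with hMdef
  have hM : M + n = m := Nat.sub_add_cancel hnm
  have hcnn : ∀ i, i ≤ m → 0 ≤ c i := fun i hi => le_trans hnonneg (hmono i m hi le_rfl)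
  have hklm : ∀ (j : Fin s) (l : Fin (n + 1)), k j l ≤ m := by
    intro j l
    rcases Nat.eq_zero_or_pos (l : ℕ) with h | h
    · have hl0 : l = 0 := by ext; simpa using h
      rw [hl0, hk0]; exact Nat.zero_le m
    · have h1 := hkl j l h
      have h2 : (l : ℕ) ≤ n := Nat.lt_succ_iff.mp l.isLt
      omega
  have hmn : (m - n + 1 : ℝ) = ((M + 1 : ℕ) : ℝ) := by
    push_cast [hMdef, Nat.cast_sub hnm]
    ring
  have key : ∀ j : Fin s, (∑ i ∈ Finset.range (m + 1), c i)
      ≤ ((M + 1 : ℕ) : ℝ) * ∑ l : Fin (n + 1), c (k j l) := by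
    intro j
    have h1 : ∑ i ∈ Finset.range (m + 1), c i
        = ∑ i ∈ Finset.range (M + 1), c i + ∑ i ∈ Finset.range n, c (M + 1 + i) := by
      rw [Finset.range_eq_Ico,
        ← Finset.sum_Ico_consecutive _ (by omega : 0 ≤ M + 1) (by omega : M + 1 ≤ m + 1),
        ← Finset.range_eq_Ico, Finset.sum_Ico_eq_sum_range]
      have hd : m + 1 - (M + 1) = n := by omega
      rw [hd]
    have h2 : ∑ i ∈ Finset.range (M + 1), c i ≤ ((M + 1 : ℕ) : ℝ) * c 0 := by
      calc ∑ i ∈ Finset.range (M + 1), c i ≤ ∑ _i ∈ Finset.range (M + 1), c 0 :=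
            Finset.sum_le_sum (fun i hi => by
              have : i ≤ m := by have := Finset.mem_range.mp hi; omega
              exact hmono 0 i (Nat.zero_le i) this)
        _ = ((M + 1 : ℕ) : ℝ) * c 0 := by
            rw [Finset.sum_const, Finset.card_range, nsmul_eq_mul]
    have h3 : ∑ i ∈ Finset.range n, c (M + 1 + i) ≤ ∑ l : Fin n, c (k j l.succ) := by
      rw [← Fin.sum_univ_eq_sum_range (fun i => c (M + 1 + i)) n]
      apply Finset.sum_le_sum
      intro l _
      apply hmono
      · have := hkl j l.succ (by simp [Fin.val_succ])
        simp only [Fin.val_succ] at this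
        omega
      · have : (l : ℕ) < n := l.isLt
        omega
    have h4 : ∑ l : Fin (n + 1), c (k j l) = c (k j 0) + ∑ l : Fin n, c (k j l.succ) :=
      Fin.sum_univ_succ _
    have h5 : ∑ l : Fin n, c (k j l.succ) ≤ ((M + 1 : ℕ) : ℝ) * ∑ l : Fin n, c (k j l.succ) := by
      have hnn : 0 ≤ ∑ l : Fin n, c (k j l.succ) :=
        Finset.sum_nonneg fun l _ => hcnn _ (hklm j l.succ)
      have h1M : (1 : ℝ) ≤ ((M + 1 : ℕ) : ℝ) := by exact_mod_cast Nat.succ_le_succ (Nat.zero_le M)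
      nlinarith
    rw [h1, h4, hk0, mul_add]
    linarith
  have hMpos : (0 : ℝ) < ((M + 1 : ℕ) : ℝ) := by positivity
  rw [ge_iff_le, hmn, ← haD, div_mul_eq_mul_div, Finset.sum_mul, Finset.sum_div]
  apply Finset.sum_le_sum
  intro j _
  rw [div_le_iff₀ hMpos]
  nlinarith [mul_le_mul_of_nonneg_left (key j) (ha j)]
end
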